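/- Let (E,d) be a metric space, α ∈ (0,1], T > 0, and x : [0,T] → E a continuous path (extended constantly beyond T). Fix ε, γ, c > 0. Define τ₀ = 0 and inductively τₙ = inf{t > τₙ₋₁ : sup_{u,v ∈ [τₙ₋₁,t], |u−v| ≥ ε} d(x_u,x_v)/|u−v|^α ≥ γ}. Suppose that for every n ≥ 0, sup_{t ∈ [τₙ, τₙ+ε]} d(x_{τₙ}, x_t) < c. Then sup_{u,v ∈ [0,T], |u−v| = ε} d(x_u,x_v)/ε^α < max(3c·ε^{−α}, 4γ + c·ε^{−α}). -/

import Mathlib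

open Set

/-- The "trigger set" used in the definition of the Hölder stopping times. -/
noncomputable def trigSet {E : Type*} [MetricSpace E] (α ε γ : ℝ) (x : ℝ → E) (a : ℝ) :
    Set ℝ :=
  {t | a < t ∧ γ ≤
    sSup {q | ∃ u ∈ Set.Icc a t, ∃ v ∈ Set.Icc a t,
      ε ≤ |u - v| ∧ q = dist (x u) (x v) / |u - v| ^ α}}

/-- Lemma 2.2 (restricted Hölder norm bound via Hölder stopping times). -/
theorem stmt_0
    {E : Type*} [MetricSpace E]
    (α T ε γ c : ℝ) (hα : α ∈ Set.Ioc (0:ℝ) 1) (hT : 0 < T)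
    (hε : 0 < ε) (hγ : 0 < γ) (hc : 0 < c)
    (x : ℝ → E) (hx : ContinuousOn x (Set.Icc 0 T))
    (hext : ∀ t, T ≤ t → x t = x T)
    (τ : ℕ → ℝ) (hτ0 : τ 0 = 0)
    (hτ : ∀ n, τ (n+1) =
      sInf {t | τ n < t ∧ γ ≤
        sSup {q | ∃ u ∈ Set.Icc (τ n) t, ∃ v ∈ Set.Icc (τ n) t,
          ε ≤ |u - v| ∧ q = dist (x u) (x v) / |u - v| ^ α}})
    (hsup : ∀ n, sSup {q | ∃ t ∈ Set.Icc (τ n) (τ n + ε),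
      q = dist (x (τ n)) (x t)} < c) :
    sSup {q | ∃ u ∈ Set.Icc (0:ℝ) T, ∃ v ∈ Set.Icc (0:ℝ) T,
        |u - v| = ε ∧ q = dist (x u) (x v) / |u - v| ^ α}
      < max (3 * c * ε ^ (-α)) (4 * γ + c * ε ^ (-α)) := by
  classical
  obtain ⟨hα0, hα1⟩ := hα
  have hεα : (0:ℝ) < ε ^ α := Real.rpow_pos_of_pos hε α
  have hγε0 : (0:ℝ) ≤ γ * ε ^ α := le_of_lt (mul_pos hγ hεα)
  have hT0 : (0:ℝ) ≤ T := hT.le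
  -- continuity on `Ici 0`
  have hcont : ContinuousOn x (Ici 0) := by
    have hmap : MapsTo (fun t : ℝ => min t T) (Ici 0) (Icc 0 T) :=
      fun t ht => ⟨le_min ht hT0, min_le_right _ _⟩
    have h1 : ContinuousOn (x ∘ fun t : ℝ => min t T) (Ici 0) :=
      hx.comp ((continuous_id.min continuous_const).continuousOn) hmap
    refine h1.congr fun t ht => ?_
    rcases le_or_gt t T with h | h
    · simp [Function.comp, min_eq_left h]
    · simp [Function.comp, min_eq_right h.le, hext t h.le]
  have hτnn : ∀ n, 0 ≤ τ n := by
    intro n; induction n with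
    | zero => rw [hτ0]
    | succ n ih =>
      rw [hτ n]
      exact Real.sInf_nonneg fun t ht => le_trans ih (le_of_lt ht.1)
  have hτ' : ∀ n, τ (n+1) = sInf (trigSet α ε γ x (τ n)) := hτ
  -- boundedness of the ratio sets
  have hbdd : ∀ a b : ℝ, 0 ≤ a →
      BddAbove {q | ∃ u ∈ Set.Icc a b, ∃ v ∈ Set.Icc a b,
        ε ≤ |u - v| ∧ q = dist (x u) (x v) / |u - v| ^ α} := by
    intro a b ha
    have hK : IsCompact (x '' Icc a b) :=
      (isCompact_Icc).image_of_continuousOn (hcont.mono fun t ht => le_trans ha ht.1)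
    obtain ⟨M, hM⟩ := Metric.isBounded_iff.mp hK.isBounded
    refine ⟨max (M / ε ^ α) 0, ?_⟩
    rintro q ⟨u, hu, v, hv, hge, rfl⟩
    have h1 : dist (x u) (x v) ≤ M := hM (mem_image_of_mem x hu) (mem_image_of_mem x hv)
    have hM0 : 0 ≤ M := le_trans dist_nonneg h1
    have h2 : ε ^ α ≤ |u - v| ^ α := Real.rpow_le_rpow hε.le hge hα0.le
    exact le_max_of_le_left (div_le_div₀ hM0 h1 hεα h2)
  -- elements of the trigger set are at distance ≥ ε from τ n
  have hstep : ∀ n t, t ∈ trigSet α ε γ x (τ n) → τ n + ε ≤ t := by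
    intro n t ht
    obtain ⟨ht1, ht2⟩ := ht
    by_contra hcon
    push_neg at hcon
    have hempty : {q | ∃ u ∈ Set.Icc (τ n) t, ∃ v ∈ Set.Icc (τ n) t,
        ε ≤ |u - v| ∧ q = dist (x u) (x v) / |u - v| ^ α} = (∅ : Set ℝ) := by
      apply eq_empty_iff_forall_notMem.mpr
      rintro q ⟨u, hu, v, hv, hge, -⟩
      have h5 : |u - v| ≤ t - τ n :=
        abs_sub_le_iff.mpr ⟨by linarith [hu.1, hu.2, hv.1, hv.2],
          by linarith [hu.1, hu.2, hv.1, hv.2]⟩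
      linarith
    rw [hempty, Real.sSup_empty] at ht2
    linarith
  have hτsucc : ∀ n, (trigSet α ε γ x (τ n)).Nonempty → τ n + ε ≤ τ (n+1) := by
    intro n hne
    rw [hτ' n]
    exact le_csInf hne (hstep n)
  have hnotin : ∀ n w, w < τ (n+1) → w ∉ trigSet α ε γ x (τ n) := by
    intro n w hw hmem
    have hbb : BddBelow (trigSet α ε γ x (τ n)) := ⟨τ n, fun t ht => le_of_lt ht.1⟩
    have h1 := csInf_le hbb hmem
    rw [hτ' n] at hw
    linarith
  -- the basic Hölder bound below the next stopping time
  have KB0 : ∀ n u v, τ n ≤ u → u < v → ε ≤ v - u →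
      v ∉ trigSet α ε γ x (τ n) → dist (x u) (x v) ≤ γ * (v - u) ^ α := by
    intro n u v hu huv hge hnot
    have hτv : τ n < v := lt_of_le_of_lt hu huv
    have habs : |u - v| = v - u := by
      rw [abs_sub_comm]; exact abs_of_nonneg (by linarith)
    have hsupv : sSup {q | ∃ a ∈ Set.Icc (τ n) v, ∃ b ∈ Set.Icc (τ n) v,
        ε ≤ |a - b| ∧ q = dist (x a) (x b) / |a - b| ^ α} < γ := by
      by_contra hcon
      push_neg at hcon
      exact hnot ⟨hτv, hcon⟩
    have hmem : dist (x u) (x v) / |u - v| ^ α ∈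
        {q | ∃ a ∈ Set.Icc (τ n) v, ∃ b ∈ Set.Icc (τ n) v,
          ε ≤ |a - b| ∧ q = dist (x a) (x b) / |a - b| ^ α} :=
      ⟨u, ⟨hu, huv.le⟩, v, ⟨hτv.le, le_rfl⟩, by rw [habs]; exact hge, rfl⟩
    have hle := le_csSup (hbdd (τ n) v (hτnn n)) hmem
    rw [habs] at hle
    have hlt : dist (x u) (x v) / (v - u) ^ α < γ := lt_of_le_of_lt hle hsupv
    have hp : (0:ℝ) < (v - u) ^ α := Real.rpow_pos_of_pos (by linarith) α
    exact le_of_lt ((div_lt_iff₀ hp).mp hlt)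
  -- the Hölder bound up to (and including) the next stopping time, for gaps > ε
  have KB2 : ∀ n u, (trigSet α ε γ x (τ n)).Nonempty → τ n ≤ u → ε < τ (n+1) - u →
      dist (x u) (x (τ (n+1))) ≤ γ * (τ (n+1) - u) ^ α := by
    intro n u hne hu hgap
    have hs0 : (0:ℝ) ≤ τ (n+1) := hτnn (n+1)
    apply le_of_forall_pos_le_add
    intro η hη
    have hcw : ContinuousWithinAt x (Ici 0) (τ (n+1)) := hcont _ hs0
    rw [Metric.continuousWithinAt_iff] at hcw
    obtain ⟨δ, hδ0, hδ⟩ := hcw η hη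
    set m := min (δ / 2) ((τ (n+1) - u - ε) / 2) with hm
    have hm0 : 0 < m := lt_min (by linarith) (by linarith)
    have hm1 : m ≤ (τ (n+1) - u - ε) / 2 := min_le_right _ _
    have hm2 : m ≤ δ / 2 := min_le_left _ _
    set v' := τ (n+1) - m with hv'
    have h1 : u + ε < v' := by simp only [hv']; linarith
    have h2 : v' < τ (n+1) := by simp only [hv']; linarith
    have h3 : v' ∈ Ici (0:ℝ) := by
      simp only [mem_Ici, hv']
      have := hτnn n
      linarith
    have hdv : dist v' (τ (n+1)) < δ := by
      rw [Real.dist_eq, hv']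
      rw [abs_of_nonpos (by linarith)]
      linarith
    have hnear := hδ h3 hdv
    have hK := KB0 n u v' hu (by linarith) (by linarith) (hnotin n v' h2)
    have hmono : (v' - u) ^ α ≤ (τ (n+1) - u) ^ α :=
      Real.rpow_le_rpow (by linarith) (by linarith) hα0.le
    calc dist (x u) (x (τ (n+1)))
        ≤ dist (x u) (x v') + dist (x v') (x (τ (n+1))) := dist_triangle _ _ _
      _ ≤ γ * (v' - u) ^ α + η := add_le_add hK hnear.le
      _ ≤ γ * (τ (n+1) - u) ^ α + η :=
          add_le_add_left (mul_le_mul_of_nonneg_left hmono hγ.le) η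
  -- rpow bound for gaps up to 2ε
  have h2ε : ∀ r : ℝ, 0 ≤ r → r ≤ 2 * ε → r ^ α ≤ 2 * ε ^ α := by
    intro r hr0 hr
    calc r ^ α ≤ (2 * ε) ^ α := Real.rpow_le_rpow hr0 hr hα0.le
      _ = 2 ^ α * ε ^ α := Real.mul_rpow (by norm_num) hε.le
      _ ≤ 2 * ε ^ α := by
          have h21 : (2:ℝ) ^ α ≤ 2 ^ (1:ℝ) :=
            Real.rpow_le_rpow_of_exponent_le one_le_two hα1
          rw [Real.rpow_one] at h21
          exact mul_le_mul_of_nonneg_right h21 hεα.le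
  -- the uniform constant c' < c
  set N : ℕ := Nat.ceil (T / ε) + 1 with hN
  have hrne : (Finset.range (N + 1)).Nonempty := Finset.nonempty_range_iff.mpr (by omega)
  set f : ℕ → ℝ :=
    fun n => sSup {q | ∃ t ∈ Set.Icc (τ n) (τ n + ε), q = dist (x (τ n)) (x t)} with hf
  set c' : ℝ := max ((Finset.range (N + 1)).sup' hrne f) 0 with hc'
  have hc'c : c' < c := max_lt ((Finset.sup'_lt_iff hrne).mpr fun n _ => hsup n) hc
  have hc'0 : 0 ≤ c' := le_max_right _ _
  have hd' : ∀ n, n ≤ N → ∀ t, τ n ≤ t → t ≤ τ n + ε → dist (x (τ n)) (x t) ≤ c' := by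
    intro n hn t ht1 ht2
    have himg : {q | ∃ t ∈ Set.Icc (τ n) (τ n + ε), q = dist (x (τ n)) (x t)} =
        (fun t => dist (x (τ n)) (x t)) '' Icc (τ n) (τ n + ε) := by
      ext q
      constructor
      · rintro ⟨t, ht, rfl⟩; exact ⟨t, ht, rfl⟩
      · rintro ⟨t, ht, rfl⟩; exact ⟨t, ht, rfl⟩
    have hb : BddAbove {q | ∃ t ∈ Set.Icc (τ n) (τ n + ε), q = dist (x (τ n)) (x t)} := by
      rw [himg]
      exact ((isCompact_Icc).image_of_continuousOn
        ((continuous_const.dist continuous_id).comp_continuousOn (hcont.mono fun r hr => le_trans (hτnn n) hr.1))).bddAbove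
    have hmem : dist (x (τ n)) (x t) ∈
        {q | ∃ t ∈ Set.Icc (τ n) (τ n + ε), q = dist (x (τ n)) (x t)} := ⟨t, ⟨ht1, ht2⟩, rfl⟩
    have h1 : dist (x (τ n)) (x t) ≤ f n := le_csSup hb hmem
    have h2 : f n ≤ c' :=
      le_trans (Finset.le_sup' f (Finset.mem_range.mpr (by omega))) (le_max_left _ _)
    exact h1.trans h2
  -- the main pointwise claim
  have claim : ∀ u v : ℝ, 0 ≤ u → u ≤ T → v = u + ε →
      dist (x u) (x v) ≤ max (3 * c') (4 * γ * ε ^ α + c') := by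
    intro u v hu0 huT hvdef
    have huv : u < v := by rw [hvdef]; linarith
    have hvu : v - u = ε := by rw [hvdef]; ring
    have hex : ∃ k, τ k ≤ u ∧ (trigSet α ε γ x (τ k) = ∅ ∨ u < τ (k+1)) := by
      by_contra hcon
      push_neg at hcon
      have hall : ∀ k, τ k ≤ u := by
        intro k; induction k with
        | zero => rw [hτ0]; exact hu0
        | succ k ih => exact (hcon k ih).2
      have hgrow : ∀ k : ℕ, (k : ℝ) * ε ≤ τ k := by
        intro k; induction k with
        | zero => simp [hτ0]
        | succ k ih =>
          have := hτsucc k (hcon k (hall k)).1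
          push_cast
          linarith
      obtain ⟨k, hk⟩ := exists_nat_gt (T / ε)
      have h1 := hgrow k
      have h2 := hall k
      rw [div_lt_iff₀ hε] at hk
      linarith
    set n := Nat.find hex with hn
    obtain ⟨hτu, hdisj⟩ := Nat.find_spec hex
    rcases eq_or_ne (trigSet α ε γ x (τ n)) ∅ with hemp | hne
    · have hK := KB0 n u v hτu huv hvu.ge (by simp [hemp])
      rw [hvu] at hK
      refine le_trans hK (le_max_of_le_right ?_)
      linarith
    · have hus : u < τ (n + 1) := hdisj.resolve_left hne
      have hmin : ∀ k, k < n → ¬(τ k ≤ u ∧ (trigSet α ε γ x (τ k) = ∅ ∨ u < τ (k+1))) :=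
        fun k hk => Nat.find_min hex hk
      have hτk : ∀ k, k ≤ n → τ k ≤ u := by
        intro k; induction k with
        | zero => intro _; rw [hτ0]; exact hu0
        | succ k ih =>
          intro hk
          have hk' : k < n := Nat.lt_of_succ_le hk
          have h1 : τ k ≤ u := ih hk'.le
          have h2 := hmin k hk'
          push_neg at h2
          exact (h2 h1).2
      have hgrow : ∀ k, k ≤ n → (k : ℝ) * ε ≤ τ k := by
        intro k; induction k with
        | zero => intro _; simp [hτ0]
        | succ k ih =>
          intro hk
          have hk' : k < n := Nat.lt_of_succ_le hk
          have h2 := hmin k hk'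
          push_neg at h2
          have h3 := hτsucc k (h2 (hτk k hk'.le)).1
          have h4 := ih hk'.le
          push_cast
          linarith
      have hnN : n + 1 ≤ N := by
        have h1 : (n : ℝ) * ε ≤ T := le_trans (hgrow n le_rfl) (le_trans hτu huT)
        have h2 : (n : ℝ) ≤ T / ε := by rw [le_div_iff₀ hε]; linarith
        have h3 : n ≤ Nat.ceil (T / ε) := Nat.cast_le.mp (le_trans h2 (Nat.le_ceil _))
        omega
      rcases lt_or_ge v (τ (n+1)) with hvs | hsv
      · have hK := KB0 n u v hτu huv hvu.ge (hnotin n v hvs)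
        rw [hvu] at hK
        refine le_trans hK (le_max_of_le_right ?_)
        linarith
      · have hvle : v ≤ τ (n+1) + ε := by rw [hvdef]; linarith
        have hA : dist (x (τ (n+1))) (x v) ≤ c' := hd' (n+1) hnN v hsv hvle
        have hsv2 : τ (n+1) ≤ u + ε := by rw [hvdef] at hsv; exact hsv
        have hB : dist (x u) (x (τ (n+1))) ≤
            max (3 * (γ * ε ^ α)) (max (2 * c') (c' + 2 * (γ * ε ^ α))) := by
          rcases le_or_gt (τ n + ε) u with hcase | hcase
          · have h1 : dist (x (u - ε)) (x u) ≤ γ * (u - (u - ε)) ^ α :=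
              KB0 n (u - ε) u (by linarith) (by linarith) (by linarith) (hnotin n u hus)
            have he : u - (u - ε) = ε := by ring
            rw [he] at h1
            have h2 : dist (x (u - ε)) (x (τ (n+1))) ≤ γ * (τ (n+1) - (u - ε)) ^ α :=
              KB2 n (u - ε) (nonempty_iff_ne_empty.mpr hne) (by linarith) (by linarith)
            have h3 : (τ (n+1) - (u - ε)) ^ α ≤ 2 * ε ^ α :=
              h2ε _ (by linarith) (by linarith)
            have h4 : dist (x (u - ε)) (x (τ (n+1))) ≤ γ * (2 * ε ^ α) :=
              le_trans h2 (mul_le_mul_of_nonneg_left h3 hγ.le)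
            refine le_max_of_le_left ?_
            calc dist (x u) (x (τ (n+1)))
                ≤ dist (x u) (x (u - ε)) + dist (x (u - ε)) (x (τ (n+1))) :=
                  dist_triangle _ _ _
              _ = dist (x (u - ε)) (x u) + dist (x (u - ε)) (x (τ (n+1))) := by
                  rw [dist_comm (x u)]
              _ ≤ γ * ε ^ α + γ * (2 * ε ^ α) := add_le_add h1 h4
              _ = 3 * (γ * ε ^ α) := by ring
          · have h1 : dist (x (τ n)) (x u) ≤ c' := hd' n (by omega) u hτu hcase.le
            have hsτ : τ n + ε ≤ τ (n+1) := hτsucc n (nonempty_iff_ne_empty.mpr hne)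
            rcases eq_or_lt_of_le hsτ with heq | hlt2
            · have h2 : dist (x (τ n)) (x (τ (n+1))) ≤ c' :=
                hd' n (by omega) (τ (n+1)) (by linarith) (le_of_eq heq.symm)
              refine le_max_of_le_right (le_max_of_le_left ?_)
              calc dist (x u) (x (τ (n+1)))
                  ≤ dist (x u) (x (τ n)) + dist (x (τ n)) (x (τ (n+1))) :=
                    dist_triangle _ _ _
                _ = dist (x (τ n)) (x u) + dist (x (τ n)) (x (τ (n+1))) := by
                    rw [dist_comm (x u)]
                _ ≤ c' + c' := add_le_add h1 h2
                _ = 2 * c' := by ring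
            · have h2 : dist (x (τ n)) (x (τ (n+1))) ≤ γ * (τ (n+1) - τ n) ^ α :=
                KB2 n (τ n) (nonempty_iff_ne_empty.mpr hne) le_rfl (by linarith)
              have h3 : (τ (n+1) - τ n) ^ α ≤ 2 * ε ^ α :=
                h2ε _ (by linarith) (by linarith)
              have h4 : dist (x (τ n)) (x (τ (n+1))) ≤ γ * (2 * ε ^ α) :=
                le_trans h2 (mul_le_mul_of_nonneg_left h3 hγ.le)
              refine le_max_of_le_right (le_max_of_le_right ?_)
              calc dist (x u) (x (τ (n+1)))
                  ≤ dist (x u) (x (τ n)) + dist (x (τ n)) (x (τ (n+1))) :=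
                    dist_triangle _ _ _
                _ = dist (x (τ n)) (x u) + dist (x (τ n)) (x (τ (n+1))) := by
                    rw [dist_comm (x u)]
                _ ≤ c' + γ * (2 * ε ^ α) := add_le_add h1 h4
                _ = c' + 2 * (γ * ε ^ α) := by ring
        have htri : dist (x u) (x v) ≤
            max (3 * (γ * ε ^ α)) (max (2 * c') (c' + 2 * (γ * ε ^ α))) + c' :=
          le_trans (dist_triangle _ (x (τ (n+1))) _) (add_le_add hB hA)
        refine le_trans htri ?_
        rw [← max_add_add_right, ← max_add_add_right]
        refine max_le (le_max_of_le_right (by linarith))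
          (max_le (le_max_of_le_left (by linarith)) ?_)
        rcases le_total c' (2 * (γ * ε ^ α)) with h | h
        · exact le_max_of_le_right (by linarith)
        · exact le_max_of_le_left (by linarith)
  -- final assembly
  have hinv : ε ^ (-α) * ε ^ α = 1 := by
    rw [Real.rpow_neg hε.le]
    exact inv_mul_cancel₀ hεα.ne'
  have hεnegpos : (0:ℝ) < ε ^ (-α) := Real.rpow_pos_of_pos hε _
  have hfin : ∀ q ∈ {q | ∃ u ∈ Set.Icc (0:ℝ) T, ∃ v ∈ Set.Icc (0:ℝ) T,
      |u - v| = ε ∧ q = dist (x u) (x v) / |u - v| ^ α},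
      q ≤ max (3 * c' * ε ^ (-α)) (4 * γ + c' * ε ^ (-α)) := by
    rintro q ⟨u, hu, v, hv, habs, rfl⟩
    rw [habs]
    have key : dist (x u) (x v) ≤ max (3 * c') (4 * γ * ε ^ α + c') := by
      rcases le_total u v with h | h
      · have h2 : v - u = ε := by
          rw [← habs, abs_sub_comm, abs_of_nonneg (by linarith)]
        exact claim u v hu.1 hu.2 (by linarith)
      · have h2 : u - v = ε := by rw [← habs, abs_of_nonneg (by linarith)]
        rw [dist_comm]
        exact claim v u hv.1 hv.2 (by linarith)
    rw [div_le_iff₀ hεα]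
    refine le_trans key (max_le ?_ ?_)
    · have e1 : 3 * c' * ε ^ (-α) * ε ^ α = 3 * c' := by
        rw [mul_assoc, hinv, mul_one]
      calc (3:ℝ) * c' = 3 * c' * ε ^ (-α) * ε ^ α := e1.symm
        _ ≤ max (3 * c' * ε ^ (-α)) (4 * γ + c' * ε ^ (-α)) * ε ^ α :=
            mul_le_mul_of_nonneg_right (le_max_left _ _) hεα.le
    · have e2 : (4 * γ + c' * ε ^ (-α)) * ε ^ α = 4 * γ * ε ^ α + c' := by
        rw [add_mul, mul_assoc c' (ε ^ (-α)) (ε ^ α), hinv, mul_one]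
      calc 4 * γ * ε ^ α + c' = (4 * γ + c' * ε ^ (-α)) * ε ^ α := e2.symm
        _ ≤ max (3 * c' * ε ^ (-α)) (4 * γ + c' * ε ^ (-α)) * ε ^ α :=
            mul_le_mul_of_nonneg_right (le_max_right _ _) hεα.le
  refine lt_of_le_of_lt (Real.sSup_le hfin ?_) ?_
  · exact le_max_of_le_left (mul_nonneg (mul_nonneg (by norm_num) hc'0) hεnegpos.le)
  · exact max_lt_max (mul_lt_mul_of_pos_right (by linarith) hεnegpos)
      (add_lt_add_right (mul_lt_mul_of_pos_right hc'c hεnegpos) _)
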